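/- Let (R, m) be a one-dimensional Cohen-Macaulay local ring with fractional canonical ideal K, which is not Gorenstein, and set S = R[K] and 𝔠 = R : S. Then R/𝔠 is a Gorenstein (Artinian) ring if and only if K² = K³ and μ_R(K²/K) = 1. -/

import Mathlib

open IsLocalRing

/-- The length of a module, as the Krull dimension of its submodule lattice. -/
noncomputable def moduleLength (R M : Type*) [Ring R] [AddCommGroup M] [Module R M] : ℕ∞ :=
  WithBot.unbotD 0 (Order.krullDim (Submodule R M))

/-- `K` is a fractional canonical ideal of `R` (inside a total quotient ring `Q`):
`R ⊆ K ⊆ \bar R` and `K ≅ K_R`, the latter expressed through the Herzog–Kunz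
double-annihilator characterization of canonical fractional ideals. -/
def IsFracCanonical (R Q : Type*) [CommRing R] [CommRing Q] [Algebra R Q]
    (K : Submodule R Q) : Prop :=
  K.FG ∧ (1 : Submodule R Q) ≤ K ∧
    K ≤ Subalgebra.toSubmodule (integralClosure R Q) ∧
    ∀ F : Submodule R Q, F.FG → (1 : Submodule R Q) ≤ F → K / (K / F) = F

/-- The conductor ideal `𝔠 = R : R[K]` of `R`. -/
noncomputable def condIdeal (R Q : Type*) [CommRing R] [CommRing Q] [Algebra R Q]
    (K : Submodule R Q) : Ideal R :=
  Submodule.comap (Algebra.linearMap R Q)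
    ((1 : Submodule R Q) / (Subalgebra.toSubmodule (Algebra.adjoin R (K : Set Q))))

/-- An Artinian Gorenstein ring: an Artinian local ring whose socle
(the annihilator of the maximal ideal, here the Jacobson radical) has length one. -/
def IsArtinianGorensteinRing (B : Type*) [CommRing B] : Prop :=
  IsArtinianRing B ∧ IsLocalRing B ∧
    moduleLength B
      ↥(Submodule.colon (⊥ : Submodule B B) (Ideal.jacobson (⊥ : Ideal B))) = 1


open Submodule

section DivAux
variable {R Q : Type*} [CommRing R] [CommRing Q] [Algebra R Q]

lemma aux_div_mul (X Y Z : Submodule R Q) : X / (Y * Z) = X / Y / Z := by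
  ext x
  simp only [Submodule.mem_div_iff_forall_mul_mem]
  constructor
  · intro h z hz y hy
    have : y * z ∈ Y * Z := Submodule.mul_mem_mul hy hz
    have := h _ this
    simpa [mul_comm, mul_left_comm, mul_assoc] using this
  · intro h w hw
    refine Submodule.mul_induction_on hw (fun y hy z hz => ?_) (fun a b ha hb => ?_)
    · have := h z hz y hy
      simpa [mul_comm, mul_left_comm, mul_assoc] using this
    · simpa [mul_add] using add_mem ha hb

lemma aux_div_one (X : Submodule R Q) : X / 1 = X := by
  ext x
  simp only [Submodule.mem_div_iff_forall_mul_mem]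
  constructor
  · intro h
    simpa using h 1 (Submodule.one_le.mp le_rfl)
  · intro hx y hy
    rw [Submodule.one_eq_span] at hy
    obtain ⟨r, rfl⟩ := Submodule.mem_span_singleton.mp hy
    rw [mul_smul_comm, mul_one]
    exact Submodule.smul_mem _ _ hx

lemma aux_div_le_div (X : Submodule R Q) {U V : Submodule R Q} (h : U ≤ V) : X / V ≤ X / U :=
  fun x hx y hy => hx y (h hy)

lemma aux_div_sup (X U V : Submodule R Q) : X / (U ⊔ V) = X / U ⊓ X / V := by
  apply le_antisymm
  · exact le_inf (aux_div_le_div X le_sup_left) (aux_div_le_div X le_sup_right)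
  · intro x hx y hy
    obtain ⟨u, hu, v, hv, rfl⟩ := Submodule.mem_sup.mp hy
    rw [mul_add]
    exact add_mem (hx.1 u hu) (hx.2 v hv)

end DivAux

section DivAux2
variable {R Q : Type*} [CommRing R] [CommRing Q] [Algebra R Q]

lemma aux_span_mul_span_singleton (a b : Q) :
    (Submodule.span R {a} : Submodule R Q) * Submodule.span R {b} = Submodule.span R {a * b} := by
  rw [Submodule.span_mul_span, Set.singleton_mul_singleton]

lemma aux_div_span_unit (X : Submodule R Q) (u : Qˣ) :
    X / Submodule.span R {(u : Q)} = Submodule.span R {((u⁻¹ : Qˣ) : Q)} * X := by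
  ext x
  simp only [Submodule.mem_div_iff_forall_mul_mem]
  constructor
  · intro h
    have hxu : x * u ∈ X := h _ (Submodule.mem_span_singleton_self _)
    have : x = ((u⁻¹ : Qˣ) : Q) * (x * u) := by
      rw [mul_comm x (u : Q), ← mul_assoc, Units.inv_mul, one_mul]
    rw [this]
    exact Submodule.mul_mem_mul (Submodule.mem_span_singleton_self _) hxu
  · intro hx y hy
    obtain ⟨r, rfl⟩ := Submodule.mem_span_singleton.mp hy
    rw [mul_smul_comm]
    refine Submodule.smul_mem _ _ ?_
    refine Submodule.mul_induction_on hx (fun m hm z hz => ?_) (fun a b ha hb => ?_)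
    · obtain ⟨s, rfl⟩ := Submodule.mem_span_singleton.mp hm
      have : s • ((u⁻¹ : Qˣ) : Q) * z * (u : Q) = s • z := by
        rw [smul_mul_assoc, smul_mul_assoc, mul_assoc, mul_comm z (u:Q), ← mul_assoc,
          Units.inv_mul, one_mul]
      rw [this]
      exact Submodule.smul_mem _ _ hz
    · rw [add_mul]
      exact add_mem ha hb

variable (K : Submodule R Q)

lemma aux_bidual (hdual : ∀ F : Submodule R Q, F.FG → 1 ≤ F → K / (K / F) = F)
    (u : Qˣ) {U : Submodule R Q} (hfg : U.FG) (hu : (u : Q) ∈ U) :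
    K / (K / U) = U := by
  set Tτ : Submodule R Q := Submodule.span R {(u : Q)} with hTτ
  set Tι : Submodule R Q := Submodule.span R {((u⁻¹ : Qˣ) : Q)} with hTι
  have hTmul : Tτ * Tι = 1 := by
    rw [hTτ, hTι, aux_span_mul_span_singleton, Units.mul_inv, Submodule.one_eq_span]
  have hVfg : (Tι * U).FG := (Submodule.fg_span_singleton _).mul hfg
  have hV1 : (1 : Submodule R Q) ≤ Tι * U := by
    rw [Submodule.one_eq_span, Submodule.span_le, Set.singleton_subset_iff]
    have : ((u⁻¹ : Qˣ) : Q) * (u : Q) ∈ Tι * U :=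
      Submodule.mul_mem_mul (Submodule.mem_span_singleton_self _) hu
    simpa [Units.inv_mul] using this
  have h0 := hdual (Tι * U) hVfg hV1
  have h1 : K / (Tι * U) = Tτ * (K / U) := by
    rw [mul_comm Tι U, aux_div_mul, hTι, aux_div_span_unit, inv_inv, ← hTτ]
  rw [h1] at h0
  have h2 : K / (Tτ * (K / U)) = Tι * (K / (K / U)) := by
    rw [mul_comm Tτ, aux_div_mul, hTτ, aux_div_span_unit, ← hTι]
  rw [h2] at h0
  have := congrArg (fun W => Tτ * W) h0
  simpa only [← mul_assoc, hTmul, one_mul] using this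

end DivAux2

section FGAux
variable {R Q : Type*} [CommRing R] [IsNoetherianRing R] [CommRing Q] [Algebra R Q]

lemma aux_fg_of_le {V U : Submodule R Q} (hV : V.FG) (hUV : U ≤ V) : U.FG := by
  haveI : IsNoetherian R ↥V := isNoetherian_of_fg_of_noetherian V hV
  have : U = Submodule.map V.subtype (Submodule.comap V.subtype U) := by
    rw [Submodule.map_comap_subtype, inf_eq_right.mpr hUV]
  rw [this]
  exact (IsNoetherian.noetherian _).map _

end FGAux

section SmulAux
variable {R Q : Type*} [CommRing R] [CommRing Q] [Algebra R Q]

lemma aux_ideal_smul_eq (I : Ideal R) (N : Submodule R Q) :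
    I • N = Submodule.map (Algebra.linearMap R Q) I * N := by
  apply le_antisymm
  · rw [Submodule.smul_le]
    intro r hr n hn
    rw [Algebra.smul_def]
    exact Submodule.mul_mem_mul (Submodule.mem_map_of_mem hr) hn
  · rw [Submodule.mul_le]
    intro y hy n hn
    obtain ⟨r, hr, rfl⟩ := Submodule.mem_map.mp hy
    rw [show (Algebra.linearMap R Q) r * n = r • n from (Algebra.smul_def r n).symm]
    exact Submodule.smul_mem_smul hr hn

end SmulAux

section KrullAux

lemma aux_krullDim_unbot_eq_one_iff {α : Type*} [PartialOrder α] [BoundedOrder α] :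
    WithBot.unbotD 0 (Order.krullDim α) = 1 ↔ ((⊥ : α) ≠ ⊤ ∧ ∀ x : α, x = ⊥ ∨ x = ⊤) := by
  constructor
  · intro h
    have hd : Order.krullDim α = 1 := by
      cases hk : Order.krullDim α with
      | bot => rw [hk] at h; simp [WithBot.unbotD] at h
      | coe n => rw [hk] at h; simp only [WithBot.unbotD_coe] at h; rw [h]; rfl
    have hne : (⊥ : α) ≠ ⊤ := by
      intro hbt
      have hsub : Subsingleton α := by
        constructor
        intro a b
        have ha : a ≤ ⊥ := hbt ▸ le_top
        have hb : b ≤ ⊥ := hbt ▸ le_top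
        rw [le_bot_iff.mp ha, le_bot_iff.mp hb]
      have := Order.krullDim_nonpos_of_subsingleton (α := α)
      rw [hd] at this
      exact absurd this (by decide)
    refine ⟨hne, fun x => ?_⟩
    by_contra hx
    push_neg at hx
    obtain ⟨hx1, hx2⟩ := hx
    have hchain : ∃ p : LTSeries α, p.length = 2 := by
      refine ⟨⟨2, ![⊥, x, ⊤], ?_⟩, rfl⟩
      intro i
      fin_cases i
      · exact bot_lt_iff_ne_bot.mpr hx1
      · exact lt_top_iff_ne_top.mpr hx2
    obtain ⟨p, hp⟩ := hchain
    have := Order.LTSeries.length_le_krullDim p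
    rw [hp, hd] at this
    exact absurd this (by decide)
  · rintro ⟨hne, hall⟩
    have h1 : Order.krullDim α = 1 := by
      apply le_antisymm
      · apply iSup_le
        intro p
        have hlen : p.length ≤ 1 := by
          by_contra hl
          push_neg at hl
          have h0 : (0 : Fin (p.length + 1)) < ⟨1, by omega⟩ := by
            simp [Fin.lt_def]
          have h1' : (⟨1, by omega⟩ : Fin (p.length + 1)) < ⟨2, by omega⟩ := by
            simp [Fin.lt_def]
          have hlt1 : p.toFun 0 < p.toFun ⟨1, by omega⟩ := p.strictMono h0
          have hlt2 : p.toFun ⟨1, by omega⟩ < p.toFun ⟨2, by omega⟩ := p.strictMono h1'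
          rcases hall (p.toFun ⟨1, by omega⟩) with h | h
          · rw [h] at hlt1; exact not_lt_bot hlt1
          · rw [h] at hlt2; exact not_top_lt hlt2
        exact_mod_cast Nat.cast_le.mpr hlen
      · have hp : ∃ p : LTSeries α, p.length = 1 := by
          refine ⟨⟨1, ![⊥, ⊤], ?_⟩, rfl⟩
          intro i
          fin_cases i
          exact bot_lt_iff_ne_bot.mpr (Ne.symm (by simpa [eq_comm] using hne))
        obtain ⟨p, hp⟩ := hp
        have := Order.LTSeries.length_le_krullDim p
        rwa [hp] at this
    rw [h1]
    rfl

end KrullAux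

section MainAux
variable {R : Type*} [CommRing R] [IsNoetherianRing R] [IsLocalRing R]
variable {Q : Type*} [CommRing Q] [Algebra R Q]

lemma aux_S_fg (K : Submodule R Q) (hKfg : K.FG)
    (hKint : K ≤ Subalgebra.toSubmodule (integralClosure R Q)) :
    (Subalgebra.toSubmodule (Algebra.adjoin R (K : Set Q))).FG := by
  obtain ⟨s, hs⟩ := hKfg
  have h2 : Algebra.adjoin R (K : Set Q) = Algebra.adjoin R (s : Set Q) := by
    rw [← hs]; exact Algebra.adjoin_span (R := R) (s := (s : Set Q))
  rw [h2]
  exact fg_adjoin_of_finite s.finite_toSet (fun x hx => by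
    have hxK : x ∈ K := hs ▸ Submodule.subset_span hx
    exact hKint hxK)

set_option maxHeartbeats 1000000 in
theorem aux_main (hinj : Function.Injective (algebraMap R Q))
    (K : Submodule R Q)
    (hKfg : K.FG) (hK1 : (1 : Submodule R Q) ≤ K)
    (hKint : K ≤ Subalgebra.toSubmodule (integralClosure R Q))
    (hdual : ∀ F : Submodule R Q, F.FG → (1 : Submodule R Q) ≤ F → K / (K / F) = F)
    (hden : ∃ τ : Q, IsUnit τ ∧
      ∀ s ∈ Subalgebra.toSubmodule (Algebra.adjoin R (K : Set Q)),
        τ * s ∈ (1 : Submodule R Q))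
    (hNG : K ≠ 1) :
    IsArtinianGorensteinRing (R ⧸ condIdeal R Q K) ↔
      (K ^ 2 = K ^ 3 ∧
        ∃ ξ : ↥(K ^ 2) ⧸ Submodule.comap (K ^ 2).subtype K,
          ξ ≠ 0 ∧ Submodule.span R {ξ} = ⊤) := by
  classical
  have hinj' : Function.Injective (Algebra.linearMap R Q) := hinj
  set ι : R →ₗ[R] Q := Algebra.linearMap R Q with hιdef
  have hιmul : ∀ a b : R, ι (a * b) = ι a * ι b := fun a b => by
    simp [hιdef, Algebra.linearMap_apply, map_mul]
  set Ss : Submodule R Q := Subalgebra.toSubmodule (Algebra.adjoin R (K : Set Q)) with hSs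
  have hK_le_S : K ≤ Ss := fun x hx => Algebra.subset_adjoin hx
  have h1S : (1 : Submodule R Q) ≤ Ss :=
    Submodule.one_le.mpr (Algebra.adjoin R (K : Set Q)).one_mem
  have hSS : Ss * Ss ≤ Ss := Submodule.mul_le.mpr (fun x hx y hy => Subalgebra.mul_mem _ hx hy)
  have hSfg : Ss.FG := aux_S_fg K hKfg hKint
  have hSK : Ss * K ≤ Ss := Submodule.mul_le.mpr (fun x hx y hy => Subalgebra.mul_mem _ hx (hK_le_S hy))
  have h1fg : (1 : Submodule R Q).FG := by
    rw [Submodule.one_eq_span]; exact Submodule.fg_span_singleton _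
  have hKK1 : K / K = 1 := by
    have := hdual 1 h1fg le_rfl
    rwa [aux_div_one] at this
  obtain ⟨τ, hτunit, hτS⟩ := hden
  have h1Q : (1 : Q) ∈ (1 : Submodule R Q) := Submodule.one_le.mp le_rfl
  have hτ1 : τ ∈ (1 : Submodule R Q) := by simpa using hτS 1 (h1S h1Q)
  have hτK : τ ∈ K := hK1 hτ1
  have hτSs : τ ∈ Ss := hK_le_S hτK
  have bid : ∀ {U : Submodule R Q}, U.FG → τ ∈ U → K / (K / U) = U := by
    intro U hfg hmem
    exact aux_bidual K hdual hτunit.unit hfg (by rwa [IsUnit.unit_spec])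
  set cQ : Submodule R Q := 1 / Ss with hcQ
  have hτc : τ ∈ cQ := fun s hs => hτS s hs
  have hDS : K / Ss = cQ := by
    apply le_antisymm
    · intro x hx s hs
      rw [← hKK1]
      intro k hk
      have hsk : s * k ∈ Ss := hSK (Submodule.mul_mem_mul hs hk)
      have := hx _ hsk
      rwa [← mul_assoc] at this
    · intro x hx s hs
      exact hK1 (hx s hs)
  have hDc : K / cQ = Ss := by have := bid hSfg hτSs; rwa [hDS] at this
  have hcle1 : cQ ≤ 1 := by
    intro x hx
    have := hx 1 (h1S h1Q)
    simpa using this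
  have hcI : condIdeal R Q K = Submodule.comap ι cQ := rfl
  have hmapc : Submodule.map ι (condIdeal R Q K) = cQ := by
    rw [hcI, Submodule.map_comap_eq, ← Submodule.one_eq_range (R := R) (A := Q),
      inf_eq_right.mpr hcle1]
  set mI : Ideal R := maximalIdeal R with hmI
  set mQ : Submodule R Q := Submodule.map ι mI with hmQ
  set mS : Submodule R Q := mQ * Ss with hmS
  set mSK : Submodule R Q := mS ⊔ K with hmSK
  have hmQ1 : mQ ≤ 1 := by
    rw [hmQ, Submodule.one_eq_range]; exact LinearMap.map_le_range
  have hmS_S : mS ≤ Ss := by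
    rw [hmS]
    exact le_trans (mul_le_mul' hmQ1 le_rfl) (by rw [one_mul])
  have hmSK_S : mSK ≤ Ss := sup_le hmS_S hK_le_S
  have hmSK_fg : mSK.FG := aux_fg_of_le hSfg hmSK_S
  have hτmSK : τ ∈ mSK := le_sup_right (a := mS) hτK
  have hDmSK : K / mSK = (cQ / mQ) ⊓ 1 := by
    have h1 : K / mS = cQ / mQ := by
      rw [hmS, mul_comm mQ Ss, aux_div_mul, hDS]
    rw [hmSK, aux_div_sup, h1, hKK1]
  have hDDmSK : K / ((cQ / mQ) ⊓ 1) = mSK := by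
    rw [← hDmSK]; exact bid hmSK_fg hτmSK
  have hc_ne_top : condIdeal R Q K ≠ ⊤ := by
    intro htop
    have h1c : (1 : R) ∈ condIdeal R Q K := htop ▸ Submodule.mem_top
    have h1cQ : (1 : Q) ∈ cQ := by
      have : ι 1 ∈ cQ := h1c
      simpa [hιdef, Algebra.linearMap_apply, map_one] using this
    have hS1' : Ss ≤ 1 := fun s hs => by simpa using h1cQ s hs
    exact hNG (le_antisymm (hK_le_S.trans hS1') hK1)
  haveI hAnt : Nontrivial (R ⧸ condIdeal R Q K) := Ideal.Quotient.nontrivial_iff.mpr hc_ne_top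
  haveI hAloc : IsLocalRing (R ⧸ condIdeal R Q K) :=
    IsLocalRing.of_surjective' (Ideal.Quotient.mk _) Ideal.Quotient.mk_surjective
  have hmkker : RingHom.ker (Ideal.Quotient.mk (condIdeal R Q K)) = condIdeal R Q K :=
    Ideal.mk_ker
  have hjacA : Ideal.jacobson (⊥ : Ideal (R ⧸ condIdeal R Q K)) =
      maximalIdeal (R ⧸ condIdeal R Q K) :=
    IsLocalRing.jacobson_eq_maximalIdeal ⊥ bot_ne_top
  have h1nm : (1 : R) ∉ mI := by
    rw [hmI]
    exact fun h => (Ideal.ne_top_iff_one _).mp (maximalIdeal.isMaximal R).ne_top h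
  have hmA : maximalIdeal (R ⧸ condIdeal R Q K) =
      Ideal.map (Ideal.Quotient.mk (condIdeal R Q K)) mI := by
    apply le_antisymm
    · intro x hx
      obtain ⟨r, rfl⟩ := Ideal.Quotient.mk_surjective x
      by_cases hr : r ∈ mI
      · exact Ideal.mem_map_of_mem _ hr
      · exfalso
        have hu : IsUnit r := by
          by_contra hnu
          exact hr ((IsLocalRing.mem_maximalIdeal r).mpr hnu)
        exact (IsLocalRing.mem_maximalIdeal _).mp hx (hu.map _)
    · rw [Ideal.map_le_iff_le_comap]
      intro r hr
      rw [Ideal.mem_comap, IsLocalRing.mem_maximalIdeal, mem_nonunits_iff]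
      intro hu
      obtain ⟨v, hv⟩ := hu
      obtain ⟨y, hy⟩ := Ideal.Quotient.mk_surjective ((v⁻¹ : _ˣ) : R ⧸ condIdeal R Q K)
      have hry : Ideal.Quotient.mk (condIdeal R Q K) (r * y) = 1 := by
        rw [map_mul, ← hv, hy, Units.mul_inv]
      have hmem : r * y - 1 ∈ condIdeal R Q K := by
        rw [← Ideal.Quotient.eq_zero_iff_mem, map_sub, hry, map_one, sub_self]
      have h1m : (1 : R) ∈ mI := by
        have hrym : r * y ∈ mI := Ideal.mul_mem_right y _ hr
        have := Submodule.sub_mem mI hrym (IsLocalRing.le_maximalIdeal hc_ne_top hmem)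
        simpa using this
      exact h1nm h1m
  set socA : Ideal (R ⧸ condIdeal R Q K) :=
    Submodule.colon (⊥ : Submodule (R ⧸ condIdeal R Q K) (R ⧸ condIdeal R Q K))
      (Ideal.jacobson (⊥ : Ideal (R ⧸ condIdeal R Q K))) with hsocA
  set W : Ideal (R ⧸ condIdeal R Q K) → Submodule R Q :=
    fun I => Submodule.map ι (Ideal.comap (Ideal.Quotient.mk (condIdeal R Q K)) I) with hWdef
  set g : Ideal (R ⧸ condIdeal R Q K) → Submodule R Q := fun I => K / W I with hgdef
  have hcW : ∀ I, condIdeal R Q K ≤ Ideal.comap (Ideal.Quotient.mk (condIdeal R Q K)) I := by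
    intro I r hr
    rw [Ideal.mem_comap, Ideal.Quotient.eq_zero_iff_mem.mpr hr]
    exact I.zero_mem
  have hWc : ∀ I, cQ ≤ W I := by
    intro I
    rw [← hmapc]
    exact Submodule.map_mono (hcW I)
  have hW1 : ∀ I, W I ≤ 1 := by
    intro I
    rw [Submodule.one_eq_range]
    exact LinearMap.map_le_range
  have hWfg : ∀ I, (W I).FG := fun I => aux_fg_of_le h1fg (hW1 I)
  have hτW : ∀ I, τ ∈ W I := fun I => hWc I hτc
  have hgK : ∀ I, K ≤ g I := by
    intro I
    have := aux_div_le_div K (hW1 I)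
    rwa [aux_div_one] at this
  have hgS : ∀ I, g I ≤ Ss := by
    intro I
    have := aux_div_le_div K (hWc I)
    rwa [hDc] at this
  have hDg : ∀ I, K / g I = W I := fun I => bid (hWfg I) (hτW I)
  have hganti : ∀ {I J}, I ≤ J → g J ≤ g I := by
    intro I J h
    exact aux_div_le_div K (Submodule.map_mono (Ideal.comap_mono h))
  have hgrefl : ∀ {I J}, g J ≤ g I → I ≤ J := by
    intro I J h
    have h2 := aux_div_le_div K h
    rw [hDg I, hDg J] at h2
    have h3 : Ideal.comap (Ideal.Quotient.mk (condIdeal R Q K)) I ≤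
        Ideal.comap (Ideal.Quotient.mk (condIdeal R Q K)) J :=
      (Submodule.map_le_map_iff_of_injective hinj' _ _).mp h2
    calc I = Ideal.map (Ideal.Quotient.mk (condIdeal R Q K))
            (Ideal.comap (Ideal.Quotient.mk (condIdeal R Q K)) I) :=
          (Ideal.map_comap_of_surjective _ Ideal.Quotient.mk_surjective I).symm
      _ ≤ Ideal.map (Ideal.Quotient.mk (condIdeal R Q K))
            (Ideal.comap (Ideal.Quotient.mk (condIdeal R Q K)) J) := Ideal.map_mono h3
      _ = J := Ideal.map_comap_of_surjective _ Ideal.Quotient.mk_surjective J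
  have hWbot : W ⊥ = cQ := by
    rw [hWdef]
    simp only
    rw [← RingHom.ker_eq_comap_bot, hmkker, hmapc]
  have hgbot : g ⊥ = Ss := by
    rw [hgdef]; simp only; rw [hWbot, hDc]
  have hWsoc : W socA = (cQ / mQ) ⊓ 1 := by
    rw [hWdef]
    simp only
    ext x
    rw [Submodule.mem_map]
    constructor
    · rintro ⟨r, hr, rfl⟩
      rw [Ideal.mem_comap, hsocA] at hr
      have hr2 := Submodule.mem_colon.mp hr
      have hr' : ∀ z ∈ mI, r * z ∈ condIdeal R Q K := by
        intro z hz
        have hp : Ideal.Quotient.mk (condIdeal R Q K) z ∈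
            Ideal.jacobson (⊥ : Ideal (R ⧸ condIdeal R Q K)) := by
          rw [hjacA, hmA]
          exact Ideal.mem_map_of_mem _ hz
        have h3 := hr2 _ hp
        rw [smul_eq_mul, Submodule.mem_bot, ← map_mul] at h3
        exact Ideal.Quotient.eq_zero_iff_mem.mp h3
      refine ⟨?_, ?_⟩
      · intro y hy
        obtain ⟨z, hz, rfl⟩ := Submodule.mem_map.mp hy
        rw [← hιmul]
        exact hr' z hz
      · rw [Submodule.one_eq_range]
        exact ⟨r, rfl⟩
    · rintro ⟨hx1, hx2⟩
      rw [Submodule.one_eq_range] at hx2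
      obtain ⟨r, rfl⟩ := hx2
      refine ⟨r, ?_, rfl⟩
      rw [Ideal.mem_comap, hsocA]
      refine Submodule.mem_colon.mpr ?_
      intro p hp
      rw [hjacA, hmA] at hp
      obtain ⟨z, hz, rfl⟩ :=
        Ideal.mem_map_iff_of_surjective _ Ideal.Quotient.mk_surjective |>.mp hp
      rw [smul_eq_mul, Submodule.mem_bot, ← map_mul, Ideal.Quotient.eq_zero_iff_mem]
      have hx3 : ι r * ι z ∈ cQ := hx1 _ (Submodule.mem_map_of_mem hz)
      rw [← hιmul] at hx3
      exact hx3
  have hgsoc : g socA = mSK := by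
    rw [hgdef]; simp only; rw [hWsoc, hDDmSK]
  have hgsurj : ∀ U : Submodule R Q, mSK ≤ U → U ≤ Ss → ∃ I, g I = U := by
    intro U hU1 hU2
    have hKU : K ≤ U := le_trans le_sup_right hU1
    have hDU1 : K / U ≤ 1 := by
      have := aux_div_le_div K hKU
      rwa [hKK1] at this
    have hDUc : cQ ≤ K / U := by
      have := aux_div_le_div K hU2
      rwa [hDS] at this
    refine ⟨Ideal.map (Ideal.Quotient.mk _) (Submodule.comap ι (K / U)), ?_⟩
    have hcm : Ideal.comap (Ideal.Quotient.mk (condIdeal R Q K))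
        (Ideal.map (Ideal.Quotient.mk (condIdeal R Q K)) (Submodule.comap ι (K / U))) =
        Submodule.comap ι (K / U) := by
      rw [Ideal.comap_map_of_surjective _ Ideal.Quotient.mk_surjective,
        ← RingHom.ker_eq_comap_bot, hmkker]
      apply sup_eq_left.mpr
      intro r hr
      have : ι r ∈ cQ := by rw [← hmapc]; exact Submodule.mem_map_of_mem hr
      exact Submodule.mem_comap.mpr (hDUc this)
    have hmc : Submodule.map ι (Submodule.comap ι (K / U)) = K / U := by
      rw [Submodule.map_comap_eq, ← Submodule.one_eq_range, inf_eq_right.mpr hDU1]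
    rw [hgdef, hWdef]
    simp only
    rw [hcm, hmc]
    exact bid (aux_fg_of_le hSfg hU2) (hKU hτK)
  haveI instArt : IsArtinianRing (R ⧸ condIdeal R Q K) := by
    have hws : WellFoundedGT (Submodule R ↥Ss) :=
      (isNoetherian_of_fg_of_noetherian Ss hSfg).wellFoundedGT
    have hanti : StrictAnti (fun I => Submodule.comap Ss.subtype (g I)) := by
      intro I J hIJ
      have h1 : g J ≤ g I := hganti hIJ.le
      refine lt_of_le_of_ne (Submodule.comap_mono h1) ?_
      intro heq
      have h2 : g J = g I := by
        have hmapeq := congrArg (Submodule.map Ss.subtype) heq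
        rwa [Submodule.map_comap_subtype, Submodule.map_comap_subtype,
          inf_eq_right.mpr (hgS J), inf_eq_right.mpr (hgS I)] at hmapeq
      exact hIJ.ne (le_antisymm hIJ.le (hgrefl h2.ge))
    exact hanti.wellFoundedLT
  have hLHS : IsArtinianGorensteinRing (R ⧸ condIdeal R Q K) ↔ IsAtom socA := by
    have hpair := aux_krullDim_unbot_eq_one_iff
      (α := Submodule (R ⧸ condIdeal R Q K) ↥socA)
    have hsimp : ((⊥ : Submodule (R ⧸ condIdeal R Q K) ↥socA) ≠ ⊤ ∧
        ∀ x : Submodule (R ⧸ condIdeal R Q K) ↥socA, x = ⊥ ∨ x = ⊤) ↔ IsAtom socA := by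
      rw [← isSimpleModule_iff_isAtom]
      constructor
      · rintro ⟨h1, h2⟩
        haveI : Nontrivial (Submodule (R ⧸ condIdeal R Q K) ↥socA) := ⟨⊥, ⊤, h1⟩
        exact { toIsSimpleOrder := ⟨h2⟩ }
      · intro h
        refine ⟨?_, h.eq_bot_or_eq_top⟩
        intro hbt
        obtain ⟨a, b, hab⟩ := h.toNontrivial
        rcases h.eq_bot_or_eq_top a with ha | ha <;>
          rcases h.eq_bot_or_eq_top b with hb | hb <;>
          apply hab <;> rw [ha, hb] <;> rw [hbt]
    constructor
    · rintro ⟨-, -, h3⟩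
      exact hsimp.mp (hpair.mp h3)
    · intro hatom
      exact ⟨instArt, hAloc, hpair.mpr (hsimp.mpr hatom)⟩
  have hAtomIff : IsAtom socA ↔
      (mSK ≠ Ss ∧ ∀ U : Submodule R Q, mSK ≤ U → U ≤ Ss → U = mSK ∨ U = Ss) := by
    constructor
    · rintro ⟨h1, h2⟩
      constructor
      · intro heq
        apply h1
        have hgg : g socA = g ⊥ := by rw [hgsoc, hgbot, heq]
        exact le_antisymm (hgrefl hgg.ge) bot_le
      · intro U hU1 hU2
        obtain ⟨I, rfl⟩ := hgsurj U hU1 hU2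
        have hIs : I ≤ socA := hgrefl (hgsoc ▸ hU1)
        rcases hIs.lt_or_eq with h | h
        · right; rw [h2 I h, hgbot]
        · left; rw [h, hgsoc]
    · rintro ⟨h1, h2⟩
      constructor
      · intro h0
        apply h1
        rw [← hgsoc, h0, hgbot]
      · intro I hI
        have hU1 : mSK ≤ g I := hgsoc ▸ hganti hI.le
        have hU2 : g I ≤ Ss := hgS I
        rcases h2 (g I) hU1 hU2 with h | h
        · exact absurd (le_antisymm hI.le (hgrefl (by rw [h, hgsoc]))) hI.ne
        · exact le_bot_iff.mp (hgrefl (le_of_eq (by rw [h, hgbot])))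
  have hjacRm : mI ≤ Ideal.jacobson (⊥ : Ideal R) :=
    (IsLocalRing.jacobson_eq_maximalIdeal ⊥ bot_ne_top).ge
  have hsmulS : mI • Ss = mS := by
    rw [hmS, hmQ, aux_ideal_smul_eq]
  have hK2S : K * K ≤ Ss := le_trans (mul_le_mul' hK_le_S hK_le_S) hSS
  have hK_le_KK : K ≤ K * K := by
    have := mul_le_mul' (le_refl K) hK1
    rwa [mul_one] at this
  have h1K : (1 : Q) ∈ K := hK1 h1Q
  have hRHS : (mSK ≠ Ss ∧ ∀ U : Submodule R Q, mSK ≤ U → U ≤ Ss → U = mSK ∨ U = Ss) ↔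
      (K ^ 2 = K ^ 3 ∧
        ∃ ξ : ↥(K ^ 2) ⧸ Submodule.comap (K ^ 2).subtype K,
          ξ ≠ 0 ∧ Submodule.span R {ξ} = ⊤) := by
      have hKle2 : K ≤ K ^ 2 := by rw [pow_two]; exact hK_le_KK
      have hmSKmul : K * K ≤ mSK → mSK * mSK ≤ mSK := by
        intro hle
        have hmm : mS * mS ≤ mS := by
          rw [hmS]
          calc mQ * Ss * (mQ * Ss) ≤ mQ * Ss * (1 * Ss) :=
                mul_le_mul' le_rfl (mul_le_mul' hmQ1 le_rfl)
            _ = mQ * (Ss * Ss) := by rw [one_mul, mul_assoc]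
            _ ≤ mQ * Ss := mul_le_mul' le_rfl hSS
        have hmk : mS * K ≤ mS := by
          rw [hmS, mul_assoc]
          exact mul_le_mul' le_rfl hSK
        have hkm : K * mS ≤ mS := by rw [mul_comm]; exact hmk
        rw [hmSK, Submodule.sup_mul, Submodule.mul_sup, Submodule.mul_sup]
        refine sup_le (sup_le ?_ ?_) (sup_le ?_ ?_)
        · exact le_trans hmm le_sup_left
        · exact le_trans hmk le_sup_left
        · exact le_trans hkm le_sup_left
        · exact hle
      constructor
      · rintro ⟨hne, hsimp⟩
        have hK2nle : ¬ (K * K ≤ mSK) := by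
          intro hle
          apply hne
          refine le_antisymm hmSK_S ?_
          have hmul := hmSKmul hle
          rw [hSs, Algebra.adjoin_eq_span, Submodule.span_le]
          intro x hx
          exact Submonoid.closure_induction (motive := fun y _ => y ∈ mSK)
            (fun y hy => (le_sup_right : K ≤ mSK) hy)
            ((le_sup_right : K ≤ mSK) h1K)
            (fun a b _ _ ha hb => hmul (Submodule.mul_mem_mul ha hb)) hx
        obtain ⟨f, hfKK, hfn⟩ := SetLike.not_le_iff_exists.mp hK2nle
        have hfS : f ∈ Ss := hK2S hfKK
        have hUle : mSK ⊔ Submodule.span R {f} ≤ Ss :=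
          sup_le hmSK_S ((Submodule.span_singleton_le_iff_mem f Ss).mpr hfS)
        rcases hsimp _ le_sup_left hUle with h | h
        · exfalso
          have hfU : f ∈ mSK ⊔ Submodule.span R {f} :=
            Submodule.mem_sup_right (Submodule.mem_span_singleton_self f)
          rw [h] at hfU
          exact hfn hfU
        · have hNak : Ss ≤ (K ⊔ Submodule.span R {f}) ⊔ mI • Ss := by
            rw [hsmulS, ← h, hmSK]
            refine sup_le (sup_le ?_ ?_) ?_
            · exact le_sup_right
            · exact le_sup_of_le_left le_sup_left
            · exact le_sup_of_le_left le_sup_right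
          have hSKf : Ss ≤ K ⊔ Submodule.span R {f} :=
            Submodule.le_of_le_smul_of_le_jacobson_bot hSfg hjacRm hNak
          have hSeq : Ss = K ⊔ Submodule.span R {f} :=
            le_antisymm hSKf (sup_le hK_le_S ((Submodule.span_singleton_le_iff_mem f Ss).mpr hfS))
          have hfK : f ∉ K := fun hf => hfn ((le_sup_right : K ≤ mSK) hf)
          have hSKK : Ss = K * K := by
            refine le_antisymm ?_ hK2S
            rw [hSeq]
            exact sup_le hK_le_KK ((Submodule.span_singleton_le_iff_mem f (K * K)).mpr hfKK)
          have e2 : K ^ 2 = Ss := by rw [pow_two, ← hSKK]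
          have h32 : K ^ 3 ≤ K ^ 2 := by
            rw [pow_succ, e2]
            exact hSK
          have h23 : K ^ 2 ≤ K ^ 3 := by
            calc K ^ 2 = K ^ 2 * 1 := (mul_one _).symm
              _ ≤ K ^ 2 * K := mul_le_mul' le_rfl hK1
              _ = K ^ 3 := (pow_succ K 2).symm
          have hf2 : f ∈ K ^ 2 := by rw [pow_two]; exact hfKK
          refine ⟨le_antisymm h23 h32, Submodule.Quotient.mk ⟨f, hf2⟩, ?_, ?_⟩
          · intro h0
            rw [Submodule.Quotient.mk_eq_zero] at h0
            exact hfK (by simpa using h0)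
          · rw [eq_top_iff]
            rintro ξ' -
            obtain ⟨⟨y, hy⟩, rfl⟩ := Submodule.Quotient.mk_surjective _ ξ'
            have hyS : y ∈ K ⊔ Submodule.span R {f} := by
              rw [← hSeq]
              exact le_of_eq e2 hy
            obtain ⟨k, hk, z, hz, hkz⟩ := Submodule.mem_sup.mp hyS
            obtain ⟨r, rfl⟩ := Submodule.mem_span_singleton.mp hz
            have hsub : (⟨y, hy⟩ : ↥(K ^ 2)) - r • (⟨f, hf2⟩ : ↥(K ^ 2)) ∈
                Submodule.comap (K ^ 2).subtype K := by
              refine Submodule.mem_comap.mpr ?_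
              have : y - r • f = k := by rw [← hkz]; ring
              simpa [this] using hk
            have hmkeq : (Submodule.Quotient.mk ⟨y, hy⟩ :
                    ↥(K ^ 2) ⧸ Submodule.comap (K ^ 2).subtype K)
                = r • Submodule.Quotient.mk (⟨f, hf2⟩ : ↥(K ^ 2)) := by
              rw [← Submodule.Quotient.mk_smul]
              exact (Submodule.Quotient.eq _).mpr hsub
            rw [hmkeq]
            exact Submodule.smul_mem _ r (Submodule.mem_span_singleton_self _)
      · rintro ⟨hK23, ξ, hξ0, hξtop⟩
        obtain ⟨⟨f, hf2⟩, rfl⟩ := Submodule.Quotient.mk_surjective _ ξ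
        have hfK : f ∉ K := by
          intro hf
          apply hξ0
          rw [Submodule.Quotient.mk_eq_zero]
          exact Submodule.mem_comap.mpr (by simpa using hf)
        have hfKK : f ∈ K * K := by rw [← pow_two]; exact hf2
        have hfS : f ∈ Ss := hK2S hfKK
        have hK2sub : K ^ 2 ≤ K ⊔ Submodule.span R {f} := by
          intro y hy2
          have hmem : (Submodule.Quotient.mk (⟨y, hy2⟩ : ↥(K ^ 2)) :
              ↥(K ^ 2) ⧸ Submodule.comap (K ^ 2).subtype K) ∈
              Submodule.span R {Submodule.Quotient.mk (⟨f, hf2⟩ : ↥(K ^ 2))} := by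
            rw [hξtop]; exact Submodule.mem_top
          obtain ⟨r, hr⟩ := Submodule.mem_span_singleton.mp hmem
          have hr' : (Submodule.Quotient.mk (⟨y, hy2⟩ : ↥(K ^ 2)) :
              ↥(K ^ 2) ⧸ Submodule.comap (K ^ 2).subtype K) =
              Submodule.Quotient.mk (r • (⟨f, hf2⟩ : ↥(K ^ 2))) := by
            rw [Submodule.Quotient.mk_smul]
            exact hr.symm
          have hsub := (Submodule.Quotient.eq _).mp hr'
          have hyk : y - r • f ∈ K := by simpa using hsub
          refine Submodule.mem_sup.mpr ⟨y - r • f, hyk, r • f,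
            Submodule.smul_mem _ r (Submodule.mem_span_singleton_self f), ?_⟩
          ring
        have h42 : K ^ 4 = K ^ 2 := by
          have h4 : K ^ 4 = K ^ 3 * K := pow_succ K 3
          rw [h4, ← hK23, ← pow_succ, ← hK23]
        have h4m : K ^ 2 * K ^ 2 ≤ K ^ 2 := by
          have : K ^ 2 * K ^ 2 = K ^ 4 := by rw [← pow_add]
          rw [this, h42]
        have hSeq2 : Ss = K ^ 2 := by
          refine le_antisymm ?_ (by rw [pow_two]; exact hK2S)
          rw [hSs, Algebra.adjoin_eq_span, Submodule.span_le]
          intro x hx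
          exact Submonoid.closure_induction (motive := fun y _ => y ∈ K ^ 2)
            (fun y hy => hKle2 (hy : y ∈ K))
            (hKle2 h1K)
            (fun a b _ _ ha hb => h4m (Submodule.mul_mem_mul ha hb)) hx
        constructor
        · intro hEq
          have hNak : Ss ≤ K ⊔ mI • Ss := by
            rw [hsmulS, ← hEq, hmSK]
            exact sup_le le_sup_right le_sup_left
          have hSsK : Ss ≤ K := Submodule.le_of_le_smul_of_le_jacobson_bot hSfg hjacRm hNak
          exact hfK (hSsK hfS)
        · intro U hU1 hU2
          by_cases hfU : f ∈ U
          · right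
            refine le_antisymm hU2 ?_
            calc Ss = K ^ 2 := hSeq2
              _ ≤ K ⊔ Submodule.span R {f} := hK2sub
              _ ≤ U := sup_le (le_trans le_sup_right hU1)
                    ((Submodule.span_singleton_le_iff_mem f U).mpr hfU)
          · left
            refine le_antisymm ?_ hU1
            intro x hx
            have hxS : x ∈ K ⊔ Submodule.span R {f} :=
              hK2sub (hSeq2 ▸ hU2 hx)
            obtain ⟨k, hk, z, hz, hkz⟩ := Submodule.mem_sup.mp hxS
            obtain ⟨r, rfl⟩ := Submodule.mem_span_singleton.mp hz
            by_cases hr : r ∈ mI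
            · have hrf : r • f ∈ mS := by
                have h0 : r • f ∈ mI • Ss := Submodule.smul_mem_smul hr hfS
                rwa [hsmulS] at h0
              rw [← hkz]
              exact Submodule.add_mem _ ((le_sup_right : K ≤ mSK) hk)
                ((le_sup_left : mS ≤ mSK) hrf)
            · exfalso
              have hu : IsUnit r := by
                by_contra hnu
                exact hr ((IsLocalRing.mem_maximalIdeal r).mpr hnu)
              apply hfU
              have hkU : k ∈ U := le_trans (le_sup_right : K ≤ mSK) hU1 hk
              have hsubU : x - k ∈ U := Submodule.sub_mem _ hx hkU
              have hxkf : x - k = r • f := by rw [← hkz]; ring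
              have hfval : ((hu.unit⁻¹ : Rˣ) : R) • (x - k) = f := by
                rw [hxkf, smul_smul]
                rw [IsUnit.val_inv_mul hu, one_smul]
              rw [← hfval]
              exact Submodule.smul_mem _ _ hsubU

  exact hLHS.trans (hAtomIff.trans hRHS)

end MainAux

/-- For a one-dimensional non-Gorenstein Cohen–Macaulay local ring `R` with fractional
canonical ideal `K`, `S = R[K]` and `𝔠 = R : S`: the ring `R/𝔠` is Gorenstein iff
`K² = K³` and `μ_R(K²/K) = 1`. -/
theorem quotient_by_conductor_gorenstein_iff
    (R : Type*) [CommRing R] [IsNoetherianRing R] [IsLocalRing R]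
    (hdim : ringKrullDim R = 1)
    (hCM : ∃ x ∈ maximalIdeal R, x ∈ nonZeroDivisors R)
    (K : Submodule R (FractionRing R)) (hK : IsFracCanonical R (FractionRing R) K)
    (hNG : K ≠ 1) :
    IsArtinianGorensteinRing (R ⧸ condIdeal R (FractionRing R) K) ↔
      (K ^ 2 = K ^ 3 ∧
        ∃ ξ : ↥(K ^ 2) ⧸ Submodule.comap (K ^ 2).subtype K,
          ξ ≠ 0 ∧ Submodule.span R {ξ} = ⊤) := by
  obtain ⟨hKfg, hK1, hKint, hdual⟩ := hK
  refine aux_main (IsFractionRing.injective R (FractionRing R)) K hKfg hK1 hKint hdual ?_ hNG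
  have hSfg := aux_S_fg K hKfg hKint
  obtain ⟨s, hs⟩ := hSfg
  obtain ⟨b, hb⟩ := IsLocalization.exist_integer_multiples (nonZeroDivisors R) s
    (id : FractionRing R → FractionRing R)
  refine ⟨algebraMap R (FractionRing R) b, IsLocalization.map_units _ b, ?_⟩
  intro x hx
  rw [← hs] at hx
  have hspan : Submodule.span R (s : Set (FractionRing R)) ≤
      (1 : Submodule R (FractionRing R)) /
        Submodule.span R {algebraMap R (FractionRing R) b} := by
    rw [Submodule.span_le]
    intro y hy z hz
    obtain ⟨r, rfl⟩ := Submodule.mem_span_singleton.mp hz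
    obtain ⟨c, hc⟩ := hb y hy
    simp only [id_eq] at hc
    rw [mul_smul_comm]
    refine Submodule.smul_mem _ _ ?_
    have : y * algebraMap R (FractionRing R) b = (b : R) • y := by
      rw [Algebra.smul_def, mul_comm]
    rw [this, ← hc]
    rw [Submodule.one_eq_range]
    exact ⟨c, rfl⟩
  have := hspan hx _ (Submodule.mem_span_singleton_self _)
  rwa [mul_comm]
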